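/- Let A and B be stable matching instances on the same n workers and n firms such that all workers except possibly one worker w₁ have identical preference orders in A and B. If the set M_A ∩ M_B of matchings stable under both A and B is nonempty, then it contains a worker-optimal matching M*: a matching M* ∈ M_A ∩ M_B such that for every M ∈ M_A ∩ M_B and every worker w, w weakly prefers M*(w) to M(w) under its preference order in A and also under its preference order in B. -/
import Mathlib


/-- A stable matching instance on `n` workers and `n` firms: each worker `w` has a strict
total preference order over firms encoded by an injective rank function `wRank w`
(lower rank = more preferred), and each firm `f` has one over workers (`fRank f`). -/
structure SMInstance (n : ℕ) where
  wRank : Fin n → Fin n → Fin n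
  fRank : Fin n → Fin n → Fin n
  wRank_inj : ∀ w, Function.Injective (wRank w)
  fRank_inj : ∀ f, Function.Injective (fRank f)

/-- `(w, f)` is a blocking pair of the matching `M` under instance `I`:
`M w ≠ f`, `w` strictly prefers `f` to `M w`, and `f` strictly prefers `w`
to its `M`-partner (the worker `w'` with `M w' = f`). -/
def Blocking {n : ℕ} (I : SMInstance n) (M : Fin n → Fin n) (w f : Fin n) : Prop :=
  M w ≠ f ∧ I.wRank w f < I.wRank w (M w) ∧
    ∃ w', M w' = f ∧ I.fRank f w < I.fRank f w'

/-- A matching (bijection) is stable under `I` if it has no blocking pair. -/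
def IsStable {n : ℕ} (I : SMInstance n) (M : Fin n → Fin n) : Prop :=
  Function.Bijective M ∧ ∀ w f, ¬ Blocking I M w f

/-- The join `M₁ ∨_I M₂`: each worker gets its less preferred partner. -/
def joinMap {n : ℕ} (I : SMInstance n) (M₁ M₂ : Fin n → Fin n) : Fin n → Fin n :=
  fun w => if I.wRank w (M₁ w) < I.wRank w (M₂ w) then M₂ w else M₁ w

/-- The meet `M₁ ∧_I M₂`: each worker gets its more preferred partner. -/
def meetMap {n : ℕ} (I : SMInstance n) (M₁ M₂ : Fin n → Fin n) : Fin n → Fin n :=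
  fun w => if I.wRank w (M₁ w) < I.wRank w (M₂ w) then M₁ w else M₂ w

lemma meet_le_left {n : ℕ} (I : SMInstance n) (M₁ M₂ : Fin n → Fin n) (w : Fin n) :
    I.wRank w (meetMap I M₁ M₂ w) ≤ I.wRank w (M₁ w) := by
  unfold meetMap
  split
  · exact le_rfl
  · exact le_of_not_gt ‹_›

lemma meet_le_right {n : ℕ} (I : SMInstance n) (M₁ M₂ : Fin n → Fin n) (w : Fin n) :
    I.wRank w (meetMap I M₁ M₂ w) ≤ I.wRank w (M₂ w) := by
  unfold meetMap
  split
  · exact le_of_lt ‹_›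
  · exact le_rfl

lemma meet_eq_or {n : ℕ} (I : SMInstance n) (M₁ M₂ : Fin n → Fin n) (w : Fin n) :
    meetMap I M₁ M₂ w = M₁ w ∨ meetMap I M₁ M₂ w = M₂ w := by
  unfold meetMap
  split
  · exact Or.inl rfl
  · exact Or.inr rfl

/-- helper for injectivity of the meet -/
lemma meet_cross {n : ℕ} (I : SMInstance n) {M₁ M₂ : Fin n → Fin n}
    (h₁ : IsStable I M₁) (h₂ : IsStable I M₂) (w w' : Fin n) (hww : w ≠ w')
    (hf : M₁ w = M₂ w')
    (ha : I.wRank w (M₁ w) ≤ I.wRank w (M₂ w))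
    (hb : I.wRank w' (M₂ w') ≤ I.wRank w' (M₁ w')) : False := by
  set f := M₁ w with hfdef
  have hM2w : M₂ w ≠ f := by
    intro h
    exact hww (h₂.1.1 (h.trans hf))
  have hM1w' : M₁ w' ≠ f := by
    intro h
    exact hww (h₁.1.1 (h.symm))
  have ha' : I.wRank w f < I.wRank w (M₂ w) :=
    lt_of_le_of_ne ha (fun h => hM2w ((I.wRank_inj w) h.symm))
  have hb' : I.wRank w' f < I.wRank w' (M₁ w') := by
    have : I.wRank w' (M₂ w') ≠ I.wRank w' (M₁ w') :=
      fun h => hM1w' ((I.wRank_inj w') h.symm ▸ hf.symm)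
    rw [hf]
    exact lt_of_le_of_ne hb this
  rcases lt_trichotomy (I.fRank f w) (I.fRank f w') with h | h | h
  · exact h₂.2 w f ⟨hM2w, ha', w', hf.symm, h⟩
  · exact hww (I.fRank_inj f h)
  · exact h₁.2 w' f ⟨hM1w', hb', w, rfl, h⟩

lemma meet_stable {n : ℕ} (I : SMInstance n) {M₁ M₂ : Fin n → Fin n}
    (h₁ : IsStable I M₁) (h₂ : IsStable I M₂) : IsStable I (meetMap I M₁ M₂) := by
  set N := meetMap I M₁ M₂ with hN
  have hinj : Function.Injective N := by
    intro w w' hNe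
    by_contra hww
    rcases meet_eq_or I M₁ M₂ w with e1 | e1 <;> rcases meet_eq_or I M₁ M₂ w' with e2 | e2
    · exact hww (h₁.1.1 (by rw [← e1, ← e2]; exact hNe))
    · refine meet_cross I h₁ h₂ w w' hww (by rw [← e1, ← e2]; exact hNe) ?_ ?_
      · rw [← e1]; exact meet_le_right I M₁ M₂ w
      · rw [← e2]; exact meet_le_left I M₁ M₂ w'
    · refine meet_cross I h₂ h₁ w w' hww (by rw [← e1, ← e2]; exact hNe) ?_ ?_
      · rw [← e1]
        have : I.wRank w (meetMap I M₁ M₂ w) ≤ I.wRank w (M₁ w) := meet_le_left I M₁ M₂ w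
        exact this
      · rw [← e2]; exact meet_le_right I M₁ M₂ w'
    · exact hww (h₂.1.1 (by rw [← e1, ← e2]; exact hNe))
  refine ⟨Finite.injective_iff_bijective.mp hinj, ?_⟩
  rintro w f ⟨hne, hlt, w', hw', hr⟩
  rcases meet_eq_or I M₁ M₂ w' with e | e
  · have hM1f : M₁ w' = f := by rw [← e]; exact hw'
    have hM1w : M₁ w ≠ f := by
      intro h
      have := lt_of_lt_of_le hlt (meet_le_left I M₁ M₂ w)
      rw [h] at this
      exact lt_irrefl _ this
    exact h₁.2 w f ⟨hM1w, lt_of_lt_of_le hlt (meet_le_left I M₁ M₂ w), w', hM1f, hr⟩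
  · have hM2f : M₂ w' = f := by rw [← e]; exact hw'
    have hM2w : M₂ w ≠ f := by
      intro h
      have := lt_of_lt_of_le hlt (meet_le_right I M₁ M₂ w)
      rw [h] at this
      exact lt_irrefl _ this
    exact h₂.2 w f ⟨hM2w, lt_of_lt_of_le hlt (meet_le_right I M₁ M₂ w), w', hM2f, hr⟩

/-- Two bijections on `Fin n` that agree off a single point agree everywhere. -/
lemma eq_of_agree_off_one {n : ℕ} {g h : Fin n → Fin n}
    (hg : Function.Injective g) (hh : Function.Surjective h) (w₁ : Fin n)
    (H : ∀ w, w ≠ w₁ → g w = h w) : g = h := by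
  funext w
  by_cases hw : w = w₁
  · subst hw
    obtain ⟨u, hu⟩ := hh (g w)
    by_cases hu' : u = w
    · rw [← hu, hu']
    · have : g u = g w := by rw [H u hu', hu]
      exact absurd (hg this) hu'
  · exact H w hw

/-- if A and B are (1,n) and some matching is stable under both, then
there is a worker-optimal matching stable under both: every worker weakly prefers its
partner there, under its preference order in A and also in B. -/
theorem stmt11 {n : ℕ} (hn : 1 ≤ n) (A B : SMInstance n) (w₁ : Fin n)
    (hW : ∀ w, w ≠ w₁ → A.wRank w = B.wRank w)
    (hne : ∃ M, IsStable A M ∧ IsStable B M) :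
    ∃ Mstar, (IsStable A Mstar ∧ IsStable B Mstar) ∧
      ∀ M, (IsStable A M ∧ IsStable B M) →
        ∀ w, A.wRank w (Mstar w) ≤ A.wRank w (M w) ∧
             B.wRank w (Mstar w) ≤ B.wRank w (M w) := by
  classical
  -- for M, M' stable under both instances, the meets under A and B coincide
  have meetAB : ∀ M M' : Fin n → Fin n, IsStable A M → IsStable B M →
      IsStable A M' → IsStable B M' → meetMap A M M' = meetMap B M M' := by
    intro M M' hMA hMB hM'A hM'B
    have hgA := meet_stable A hMA hM'A
    have hgB := meet_stable B hMB hM'B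
    refine eq_of_agree_off_one hgA.1.1 hgB.1.2 w₁ (fun w hw => ?_)
    unfold meetMap
    rw [hW w hw]
  set P : (Fin n → Fin n) → Prop := fun M => IsStable A M ∧ IsStable B M with hP
  set cost : (Fin n → Fin n) → ℕ := fun M => ∑ w : Fin n, (A.wRank w (M w) : ℕ) with hcost
  obtain ⟨M₀, hM₀⟩ := hne
  have hex : ∃ c, ∃ M, P M ∧ cost M = c := ⟨cost M₀, M₀, hM₀, rfl⟩
  obtain ⟨Mstar, hstar, hstarc⟩ := Nat.find_spec hex
  have hmin : ∀ M, P M → Nat.find hex ≤ cost M := fun M hM => Nat.find_min' hex ⟨M, hM, rfl⟩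
  refine ⟨Mstar, hstar, ?_⟩
  intro M hM w
  set N := meetMap A Mstar M with hNdef
  have hNA : IsStable A N := meet_stable A hstar.1 hM.1
  have hNeq : meetMap A Mstar M = meetMap B Mstar M :=
    meetAB Mstar M hstar.1 hstar.2 hM.1 hM.2
  have hNB : IsStable B N := by rw [hNdef, hNeq]; exact meet_stable B hstar.2 hM.2
  have hle : ∀ v : Fin n, (A.wRank v (N v) : ℕ) ≤ (A.wRank v (Mstar v) : ℕ) :=
    fun v => meet_le_left A Mstar M v
  have hsum_le : cost N ≤ cost Mstar := Finset.sum_le_sum (fun v _ => hle v)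
  have hsum_ge : cost Mstar ≤ cost N := by
    rw [hstarc]; exact hmin N ⟨hNA, hNB⟩
  have hsum_eq : cost N = cost Mstar := le_antisymm hsum_le hsum_ge
  have hterm : ∀ v : Fin n, (A.wRank v (N v) : ℕ) = (A.wRank v (Mstar v) : ℕ) := by
    intro v
    by_contra hv
    have hlt : (A.wRank v (N v) : ℕ) < (A.wRank v (Mstar v) : ℕ) := lt_of_le_of_ne (hle v) hv
    have : cost N < cost Mstar :=
      Finset.sum_lt_sum (fun i _ => hle i) ⟨v, Finset.mem_univ v, hlt⟩
    omega
  have hNMstar : ∀ v, N v = Mstar v := by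
    intro v
    exact (A.wRank_inj v) (Fin.val_injective (hterm v))
  constructor
  · rw [← hNMstar w]; exact meet_le_right A Mstar M w
  · have : B.wRank w (meetMap B Mstar M w) ≤ B.wRank w (M w) := meet_le_right B Mstar M w
    rw [← hNeq] at this
    rw [← hNMstar w]; exact this
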